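/- Let μ ∈ ℝⁿ, Σ ∈ ℝⁿˣⁿ symmetric positive definite, and let the stationarity condition from the variation with respect to the mean hold at μ, together with the stationarity condition from the variation with respect to the Cholesky factor: −Σ⁻¹(Γ_* + (μ − μ_*)(μ − μ_*)ᵀ) + (Bᵀ Γ_E⁻¹ B + Γ_pr⁻¹) Σ = 0. Then these two conditions hold simultaneously if and only if μ = μ_* and Σ = Γ_*, where the mean stationarity condition is Σ⁻¹(μ − μ_*) − Bᵀ Γ_E⁻¹ (y − Bμ − μ_E) + Γ_pr⁻¹ (μ − μ_pr) = 0. -/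

import Mathlib

open Matrix

open scoped MatrixOrder in
/-- For positive definite `S`, `A`, if `S * A * S = A⁻¹` then `S = A⁻¹`. -/
lemma posdef_sandwich_eq_inv {n : ℕ} {S A : Matrix (Fin n) (Fin n) ℝ}
    (hS : S.PosDef) (hA : A.PosDef) (h : S * A * S = A⁻¹) : S = A⁻¹ := by
  have hSu : IsUnit S.det := hS.det_pos.ne'.isUnit
  have hAu : IsUnit A.det := hA.det_pos.ne'.isUnit
  set R := CFC.sqrt S with hRdef
  have hRR : R * R = S := CFC.sqrt_mul_sqrt_self S hS.posSemidef.nonneg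
  have hRherm : Rᴴ = R := (CFC.sqrt_nonneg S).posSemidef.1
  have hRu : IsUnit R.det := by
    have h0 : R.det * R.det = S.det := by rw [← det_mul, hRR]
    exact isUnit_of_mul_isUnit_left (h0 ▸ hSu)
  have hN : (R * A * R).PosSemidef := by
    have := hA.posSemidef.conjTranspose_mul_mul_same R
    rwa [hRherm] at this
  have hASA : A * S * A = S⁻¹ := by
    have h1 : A * (S * A * S) = 1 := by rw [h, mul_nonsing_inv _ hAu]
    have h2 : (A * (S * A * S)) * S⁻¹ = S⁻¹ := by rw [h1, one_mul]
    calc A * S * A = (A * (S * A * S)) * S⁻¹ := by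
          rw [show (A * (S * A * S)) * S⁻¹ = (A * S * A) * (S * S⁻¹) by noncomm_ring,
            mul_nonsing_inv _ hSu, mul_one]
      _ = S⁻¹ := h2
  have hN2 : (R * A * R) ^ 2 = 1 ^ 2 := by
    have hSinv : S⁻¹ = R⁻¹ * R⁻¹ := by rw [← hRR, Matrix.mul_inv_rev]
    have hsq : (R * A * R) * (R * A * R) = R * (A * S * A) * R := by
      rw [← hRR]; noncomm_ring
    rw [pow_two, hsq, hASA, hSinv, one_pow]
    calc R * (R⁻¹ * R⁻¹) * R = (R * R⁻¹) * (R⁻¹ * R) := by noncomm_ring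
      _ = 1 := by rw [mul_nonsing_inv _ hRu, nonsing_inv_mul _ hRu, one_mul]
  have hNone : R * A * R = 1 := (CFC.sq_eq_sq_iff (R * A * R) 1 hN.nonneg Matrix.PosSemidef.one.nonneg).mp hN2
  have hSA : S * A = 1 := by
    calc S * A = R * (R * A * R) * R⁻¹ := by
          rw [show R * (R * A * R) * R⁻¹ = (R * R) * A * (R * R⁻¹) by noncomm_ring,
            mul_nonsing_inv _ hRu, mul_one, hRR]
      _ = 1 := by rw [hNone, mul_one, mul_nonsing_inv _ hRu]
  exact (inv_eq_left_inv hSA).symm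

/-- Combined stationarity conditions of the linear-Gaussian analytical result:
the mean stationarity condition together with the covariance (Cholesky factor)
stationarity condition hold simultaneously if and only if `μ = μ_*` and `Σ = Γ_*`. -/
theorem combined_stationarity_iff (n m : ℕ) (hn : 0 < n) (hm : 0 < m)
    (B : Matrix (Fin m) (Fin n) ℝ) (y μE : Fin m → ℝ) (μpr : Fin n → ℝ)
    (ΓE : Matrix (Fin m) (Fin m) ℝ) (Γpr : Matrix (Fin n) (Fin n) ℝ)
    (hΓE : ΓE.PosDef) (hΓpr : Γpr.PosDef)
    (μ : Fin n → ℝ) (S : Matrix (Fin n) (Fin n) ℝ) (hS : S.PosDef) :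
    let Γstar : Matrix (Fin n) (Fin n) ℝ := (Bᵀ * ΓE⁻¹ * B + Γpr⁻¹)⁻¹
    let μstar : Fin n → ℝ := Γstar *ᵥ (Bᵀ *ᵥ (ΓE⁻¹ *ᵥ (y - μE)) + Γpr⁻¹ *ᵥ μpr)
    ((S⁻¹ *ᵥ (μ - μstar) - Bᵀ *ᵥ (ΓE⁻¹ *ᵥ (y - B *ᵥ μ - μE)) + Γpr⁻¹ *ᵥ (μ - μpr) = 0)
        ∧ (-(S⁻¹ * (Γstar + vecMulVec (μ - μstar) (μ - μstar)))
            + (Bᵀ * ΓE⁻¹ * B + Γpr⁻¹) * S = 0))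
      ↔ (μ = μstar ∧ S = Γstar) := by
  intro Γstar μstar
  set A : Matrix (Fin n) (Fin n) ℝ := Bᵀ * ΓE⁻¹ * B + Γpr⁻¹ with hAdef
  have hBtPSD : (Bᵀ * ΓE⁻¹ * B).PosSemidef := by
    have := hΓE.inv.posSemidef.conjTranspose_mul_mul_same B
    rwa [conjTranspose_eq_transpose_of_trivial] at this
  have hA : A.PosDef := Matrix.PosDef.posSemidef_add hBtPSD hΓpr.inv
  have hAu : IsUnit A.det := hA.det_pos.ne'.isUnit
  have hGstar : Γstar = A⁻¹ := rfl
  have hAG : A * Γstar = 1 := mul_nonsing_inv _ hAu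
  have hSu : IsUnit S.det := hS.det_pos.ne'.isUnit
  -- key identity for the mean condition
  have hkey : -(Bᵀ *ᵥ (ΓE⁻¹ *ᵥ (y - B *ᵥ μ - μE))) + Γpr⁻¹ *ᵥ (μ - μpr)
      = A *ᵥ (μ - μstar) := by
    have hAμstar : A *ᵥ μstar = Bᵀ *ᵥ (ΓE⁻¹ *ᵥ (y - μE)) + Γpr⁻¹ *ᵥ μpr := by
      show A *ᵥ (Γstar *ᵥ _) = _
      rw [mulVec_mulVec, hAG, one_mulVec]
    rw [mulVec_sub A μ μstar, hAμstar, hAdef]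
    simp only [add_mulVec, mulVec_sub, mulVec_add, ← mulVec_mulVec]
    abel
  constructor
  · rintro ⟨h1, h2⟩
    have hμ : μ = μstar := by
      have hcomb : (S⁻¹ + A) *ᵥ (μ - μstar) = 0 := by
        rw [add_mulVec, ← hkey, ← h1]
        abel
      have hPD : (S⁻¹ + A).PosDef := hS.inv.add hA
      have hPu : IsUnit (S⁻¹ + A).det := hPD.det_pos.ne'.isUnit
      have := congrArg (fun v => (S⁻¹ + A)⁻¹ *ᵥ v) hcomb
      simp only [mulVec_mulVec, nonsing_inv_mul _ hPu, one_mulVec, mulVec_zero] at this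
      exact sub_eq_zero.mp this
    subst hμ
    refine ⟨rfl, ?_⟩
    have hvv : vecMulVec (μstar - μstar) (μstar - μstar) = 0 := by
      ext i j
      simp [vecMulVec_apply]
    rw [hvv, add_zero, neg_add_eq_zero] at h2
    -- h2 : S⁻¹ * Γstar = A * S
    have h3 : S * (S⁻¹ * Γstar) = S * (A * S) := by rw [h2]
    rw [← mul_assoc, mul_nonsing_inv _ hSu, one_mul] at h3
    -- h3 : Γstar = S * (A * S)
    have hSAS : S * A * S = A⁻¹ := by rw [mul_assoc, ← h3, hGstar]
    exact posdef_sandwich_eq_inv hS hA hSAS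
  · rintro ⟨hμ, hSeq⟩
    subst hμ
    constructor
    · have hsplit : S⁻¹ *ᵥ (μstar - μstar) - Bᵀ *ᵥ (ΓE⁻¹ *ᵥ (y - B *ᵥ μstar - μE))
          + Γpr⁻¹ *ᵥ (μstar - μpr)
          = S⁻¹ *ᵥ (μstar - μstar) + (-(Bᵀ *ᵥ (ΓE⁻¹ *ᵥ (y - B *ᵥ μstar - μE)))
              + Γpr⁻¹ *ᵥ (μstar - μpr)) := by abel
      rw [hsplit, hkey]
      simp
    · have hvv : vecMulVec (μstar - μstar) (μstar - μstar) = 0 := by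
        ext i j
        simp [vecMulVec_apply]
      rw [hvv, add_zero, hSeq]
      have hGinv : Γstar⁻¹ = A := by
        rw [hGstar, nonsing_inv_nonsing_inv _ hAu]
      rw [hGinv, hAG, neg_add_eq_zero]
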